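/- Let (b_n^s), (b_n^g), (b_n^h) be three sequences of non-negative integers with b_1^s > 0. Define a_n^s = b_n^s, a_n^g = 2·b_n^g, a_n^h = b_{n/2}^h if n is even and a_n^h = 0 if n is odd, and set a_n = a_n^s + a_n^g + a_n^h and b_n = b_n^s + b_n^g + b_n^h for all n ≥ 1. Then there exist a topological dynamical system (X,T) and a continuous involution ι : X → X commuting with T such that O_T(n) = a_n and O_{T̄}(n) = b_n for all n ≥ 1, where (X̄,T̄) is the halved system. -/

import Mathlib

open Function

/-- `F_T(n)`: the number of points of period `n`, i.e. of `x` with `T^[n] x = x`. -/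
noncomputable def numPer {X : Type*} (T : X → X) (n : ℕ) : ℕ :=
  Nat.card {x : X // T^[n] x = x}

/-- `τ` is a closed orbit of length `n` under `T`: a set of the form
`{x, T x, …, T^[n-1] x}` of cardinality exactly `n` with `T^[n] x = x`. -/
def IsClosedOrbit {X : Type*} (T : X → X) (n : ℕ) (τ : Set X) : Prop :=
  ∃ x : X, T^[n] x = x ∧ τ = {y | ∃ k < n, T^[k] x = y} ∧ τ.ncard = n

/-- `O_T(n)`: the number of closed orbits of length `n` under `T`. -/
noncomputable def numOrb {X : Type*} (T : X → X) (n : ℕ) : ℕ :=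
  Nat.card {τ : Set X // IsClosedOrbit T n τ}

/-- The quotient `X̄` of `X` by the equivalence relation `x ∼ ι x`
(it carries the quotient topology). -/
abbrev HalfQuot {X : Type*} (ι : X → X) : Type _ := Quot (fun x y : X => ι x = y)

/-- The quotient map `π : X → X̄`. -/
abbrev halfProj {X : Type*} (ι : X → X) : X → HalfQuot ι := Quot.mk _

namespace Stmt11

variable {I : Type} (len : I → ℕ)

/-- disjoint union of cycles -/
abbrev Cyl : Type := Σ i, ZMod (len i)

/-- the shift -/
def sh : Cyl len → Cyl len := fun x => ⟨x.1, x.2 + 1⟩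

lemma sh_iter (k : ℕ) (x : Cyl len) :
    (sh len)^[k] x = ⟨x.1, x.2 + (k : ZMod (len x.1))⟩ := by
  induction k with
  | zero => simp
  | succ k ih => rw [iterate_succ_apply', ih]; simp [sh, add_assoc]

def fibEquiv (i : I) : {x : Cyl len // x.1 = i} ≃ ZMod (len i) where
  toFun x := cast (congrArg (fun j => ZMod (len j)) x.2) x.1.2
  invFun k := ⟨⟨i, k⟩, rfl⟩
  left_inv := by rintro ⟨⟨j, k⟩, rfl⟩; rfl
  right_inv := fun k => rfl

lemma fib_ncard (i : I) (hpos : 0 < len i) : Set.ncard {x : Cyl len | x.1 = i} = len i := by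
  haveI : NeZero (len i) := ⟨hpos.ne'⟩
  rw [← Nat.card_coe_set_eq]
  exact (Nat.card_congr (fibEquiv len i)).trans (Nat.card_zmod _)

lemma isClosedOrbit_sh_iff (hpos : ∀ i, 0 < len i) (n : ℕ) (hn : 1 ≤ n) (τ : Set (Cyl len)) :
    IsClosedOrbit (sh len) n τ ↔ ∃ i, len i = n ∧ τ = {x : Cyl len | x.1 = i} := by
  constructor
  · rintro ⟨⟨i, v⟩, hper, hdesc, hcard⟩
    haveI : NeZero (len i) := ⟨(hpos i).ne'⟩
    rw [sh_iter] at hper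
    have hv : v + (n : ZMod (len i)) = v := by
      have h2 := (Sigma.mk.inj_iff.mp hper).2
      exact eq_of_heq h2
    have hcast : (n : ZMod (len i)) = 0 := by
      have := congrArg (fun t => t - v) hv
      simpa [add_comm] using this
    have hdvd : len i ∣ n := (ZMod.natCast_eq_zero_iff n (len i)).mp hcast
    have hτ : τ = {x : Cyl len | x.1 = i} := by
      rw [hdesc]; ext y
      constructor
      · rintro ⟨k, hk, rfl⟩
        rw [sh_iter]; rfl
      · intro hy
        obtain ⟨j, c⟩ := y
        have hj : j = i := hy
        subst hj
        refine ⟨(c - v).val, lt_of_lt_of_le (ZMod.val_lt _) (Nat.le_of_dvd (by omega) hdvd), ?_⟩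
        rw [sh_iter]
        exact congrArg (fun t => (⟨j, t⟩ : Cyl len))
          (by rw [ZMod.natCast_rightInverse (c - v)]; ring)
    have hlen : len i = n := by
      rw [hτ] at hcard
      rw [fib_ncard len i (hpos i)] at hcard
      exact hcard
    exact ⟨i, hlen, hτ⟩
  · rintro ⟨i, hlen, rfl⟩
    haveI : NeZero (len i) := ⟨(hpos i).ne'⟩
    refine ⟨⟨i, 0⟩, ?_, ?_, ?_⟩
    · rw [sh_iter]
      exact congrArg (fun t => (⟨i, t⟩ : Cyl len)) (by rw [← hlen, ZMod.natCast_self, add_zero])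
    · ext y
      constructor
      · intro hy
        obtain ⟨j, c⟩ := y
        have hj : j = i := hy
        subst hj
        refine ⟨c.val, lt_of_lt_of_le (ZMod.val_lt _) (le_of_eq hlen), ?_⟩
        rw [sh_iter]
        exact congrArg (fun t => (⟨j, t⟩ : Cyl len))
          (by rw [ZMod.natCast_rightInverse c, zero_add])
      · rintro ⟨k, hk, rfl⟩
        rw [sh_iter]; rfl
    · rw [fib_ncard len i (hpos i), hlen]

lemma fib_injective (i j : I) (h : {x : Cyl len | x.1 = i} = {x : Cyl len | x.1 = j}) : i = j := by
  have : (⟨i, 0⟩ : Cyl len) ∈ {x : Cyl len | x.1 = i} := rfl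
  rw [h] at this
  exact this

theorem numOrb_sh (hpos : ∀ i, 0 < len i) (n : ℕ) (hn : 1 ≤ n) :
    numOrb (sh len) n = Nat.card {i : I // len i = n} := by
  unfold numOrb
  refine Nat.card_congr ?_
  refine Equiv.trans (Equiv.subtypeEquivRight (isClosedOrbit_sh_iff len hpos n hn)) ?_
  exact {
    toFun := fun σ => ⟨σ.2.choose, σ.2.choose_spec.1⟩
    invFun := fun i => ⟨{x : Cyl len | x.1 = i.1}, i.1, i.2, rfl⟩
    left_inv := fun σ => Subtype.ext σ.2.choose_spec.2.symm
    right_inv := fun i => by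
      have h : ∃ j, len j = n ∧ {x : Cyl len | x.1 = i.1} = {x : Cyl len | x.1 = j} :=
        ⟨i.1, i.2, rfl⟩
      exact Subtype.ext (fib_injective len _ _ h.choose_spec.2).symm }

end Stmt11

namespace Stmt11

section Conj

variable {α β : Type*} (e : α ≃ β) (f : α → α) (g : β → β)

lemma conj_iter (h : ∀ x, e (f x) = g (e x)) (k : ℕ) (x : α) :
    e (f^[k] x) = g^[k] (e x) := by
  induction k with
  | zero => rfl
  | succ k ih => rw [iterate_succ_apply', iterate_succ_apply', h, ih]

lemma isClosedOrbit_conj (h : ∀ x, e (f x) = g (e x)) (n : ℕ) (τ : Set α)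
    (hτ : IsClosedOrbit f n τ) : IsClosedOrbit g n (e '' τ) := by
  obtain ⟨x, hx, hdesc, hc⟩ := hτ
  refine ⟨e x, ?_, ?_, ?_⟩
  · rw [← conj_iter e f g h, hx]
  · rw [hdesc]
    ext y
    simp only [Set.mem_image, Set.mem_setOf_eq]
    constructor
    · rintro ⟨z, ⟨k, hk, rfl⟩, rfl⟩
      exact ⟨k, hk, (conj_iter e f g h k x).symm⟩
    · rintro ⟨k, hk, rfl⟩
      exact ⟨f^[k] x, ⟨k, hk, rfl⟩, conj_iter e f g h k x⟩
  · rw [Set.ncard_image_of_injective τ e.injective, hc]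

lemma numOrb_conj (h : ∀ x, e (f x) = g (e x)) (n : ℕ) :
    numOrb f n = numOrb g n := by
  have h' : ∀ y, e.symm (g y) = f (e.symm y) := fun y => by
    apply e.injective
    rw [h, e.apply_symm_apply, e.apply_symm_apply]
  refine Nat.card_congr ⟨fun τ => ⟨e '' τ.1, isClosedOrbit_conj e f g h n τ.1 τ.2⟩,
    fun σ => ⟨e.symm '' σ.1, isClosedOrbit_conj e.symm g f (fun y => (h' y)) n σ.1 σ.2⟩,
    fun τ => Subtype.ext (by simp), fun σ => Subtype.ext (by simp)⟩

end Conj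

variable {I : Type} (len : I → ℕ)

/-- length function extended to `Option I`, the extra point being a fixed point. -/
def lenO : Option I → ℕ := fun o => o.elim 1 len

def eOpt : Option (Cyl len) ≃ Cyl (lenO len) where
  toFun x := match x with
    | none => ⟨none, 0⟩
    | some ⟨i, k⟩ => ⟨some i, k⟩
  invFun x := match x with
    | ⟨none, _⟩ => none
    | ⟨some i, k⟩ => some ⟨i, k⟩
  left_inv := by rintro (_ | ⟨i, k⟩) <;> rfl
  right_inv := by
    rintro ⟨(_ | i), k⟩
    · exact congrArg (fun t => (⟨none, t⟩ : Cyl (lenO len))) (@Subsingleton.elim (ZMod 1) _ _ _)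
    · rfl

lemma eOpt_conj (x : Option (Cyl len)) :
    eOpt len (Option.map (sh len) x) = sh (lenO len) (eOpt len x) := by
  match x with
  | none => exact congrArg (fun t => (⟨none, t⟩ : Cyl (lenO len))) (@Subsingleton.elim (ZMod 1) _ _ _)
  | some ⟨i, k⟩ => rfl

lemma card_option (n : ℕ) [Finite {i : I // len i = n}] :
    Nat.card {o : Option I // lenO len o = n} =
      Nat.card {i : I // len i = n} + (if n = 1 then 1 else 0) := by
  have e : {o : Option I // lenO len o = n} ≃
      {i : I // len i = n} ⊕ {u : Unit // (1 : ℕ) = n} :=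
    { toFun := fun x => match x with
        | ⟨some i, h⟩ => Sum.inl ⟨i, h⟩
        | ⟨none, h⟩ => Sum.inr ⟨(), h⟩
      invFun := fun x => match x with
        | Sum.inl ⟨i, h⟩ => ⟨some i, h⟩
        | Sum.inr ⟨_, h⟩ => ⟨none, h⟩
      left_inv := by rintro ⟨(_ | i), h⟩ <;> rfl
      right_inv := by rintro (⟨i, h⟩ | ⟨⟨⟩, h⟩) <;> rfl }
  rw [Nat.card_congr e]
  by_cases h1 : n = 1
  · subst h1
    haveI : Unique {u : Unit // (1 : ℕ) = 1} := ⟨⟨⟨(), rfl⟩⟩, by rintro ⟨⟨⟩, _⟩; rfl⟩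
    rw [Nat.card_sum]
    simp
  · haveI : IsEmpty {u : Unit // (1 : ℕ) = n} := ⟨fun u => h1 u.2.symm⟩
    rw [Nat.card_sum]
    simp [h1]

theorem numOrb_sh_option (hpos : ∀ i, 0 < len i) (hfin : ∀ m, Finite {i : I // len i = m})
    (n : ℕ) (hn : 1 ≤ n) :
    numOrb (Option.map (sh len)) n =
      Nat.card {i : I // len i = n} + (if n = 1 then 1 else 0) := by
  haveI := hfin n
  rw [numOrb_conj (eOpt len) _ (sh (lenO len)) (eOpt_conj len) n]
  rw [numOrb_sh (lenO len) (fun o => by cases o <;> simp [lenO, hpos]) n hn]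
  exact card_option len n

lemma perSet_finite (hpos : ∀ i, 0 < len i) (hfin : ∀ m, Finite {i : I // len i = m})
    (n : ℕ) (hn : 1 ≤ n) : {z : Cyl len | (sh len)^[n] z = z}.Finite := by
  apply Set.Finite.subset (s := ⋃ d ∈ (n.divisors : Set ℕ), ⋃ i ∈ {i : I | len i = d},
    {x : Cyl len | x.1 = i})
  · apply Set.Finite.biUnion (Finset.finite_toSet _)
    intro d _
    apply Set.Finite.biUnion
    · exact Set.finite_coe_iff.mp (hfin d)
    · intro i _
      haveI : NeZero (len i) := ⟨(hpos i).ne'⟩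
      exact Set.finite_coe_iff.mp (Finite.of_equiv _ (fibEquiv len i).symm)
  · intro z hz
    obtain ⟨i, v⟩ := z
    haveI : NeZero (len i) := ⟨(hpos i).ne'⟩
    simp only [Set.mem_setOf_eq] at hz
    rw [sh_iter] at hz
    have hv : v + (n : ZMod (len i)) = v := eq_of_heq (Sigma.mk.inj_iff.mp hz).2
    have hcast : (n : ZMod (len i)) = 0 := by
      have := congrArg (fun t => t - v) hv
      simpa [add_comm] using this
    have hdvd : len i ∣ n := (ZMod.natCast_eq_zero_iff n (len i)).mp hcast
    simp only [Set.mem_iUnion, Set.mem_setOf_eq]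
    exact ⟨len i, Nat.mem_divisors.mpr ⟨hdvd, by omega⟩, i, rfl, rfl⟩

lemma optionMap_iter {α : Type*} (f : α → α) (n : ℕ) :
    (Option.map f)^[n] = Option.map (f^[n]) := by
  induction n with
  | zero => ext x; cases x <;> rfl
  | succ n ih => rw [iterate_succ', ih, iterate_succ']; ext x; cases x <;> rfl

lemma perSet_finite_option (hpos : ∀ i, 0 < len i) (hfin : ∀ m, Finite {i : I // len i = m})
    (n : ℕ) (hn : 1 ≤ n) : {x : Option (Cyl len) | (Option.map (sh len))^[n] x = x}.Finite := by
  apply Set.Finite.subset (s := insert none (some '' {z : Cyl len | (sh len)^[n] z = z}))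
  · exact Set.Finite.insert _ (Set.Finite.image _ (perSet_finite len hpos hfin n hn))
  · intro x hx
    simp only [Set.mem_setOf_eq, optionMap_iter] at hx
    cases x with
    | none => exact Set.mem_insert _ _
    | some z =>
      simp only [Option.map_some] at hx
      exact Set.mem_insert_of_mem _ ⟨z, Option.some.inj hx, rfl⟩

end Stmt11

namespace Stmt11

/-! ### Metrizability of the one-point compactification of a countable discrete space -/

theorem metrizable_onePoint (Z : Type) [TopologicalSpace Z] [DiscreteTopology Z] [Countable Z] :
    TopologicalSpace.MetrizableSpace (OnePoint Z) := by
  obtain ⟨e⟩ := nonempty_embedding_nat Z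
  set f : OnePoint Z → ℝ := fun x => match x with
    | none => 0
    | some z => 1 / (e z + 1 : ℝ) with hf
  have hcont : Continuous f := by
    rw [OnePoint.continuous_iff_from_discrete]
    have h1 : Filter.Tendsto e Filter.cofinite Filter.atTop := by
      rw [Filter.tendsto_atTop]
      intro b
      rw [Filter.eventually_cofinite]
      have : {z : Z | ¬ b ≤ e z} = e ⁻¹' {m : ℕ | m < b} := by
        ext z
        exact (by omega : ¬ b ≤ e z ↔ e z < b)
      rw [this]
      exact (Set.finite_lt_nat b).preimage e.injective.injOn
    exact tendsto_one_div_add_atTop_nhds_zero_nat.comp h1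
  have hinj : Function.Injective f := by
    intro x y hxy
    match x, y with
    | none, none => rfl
    | none, some z =>
      exfalso
      have : (1 : ℝ) / (e z + 1) ≠ 0 := by positivity
      exact this hxy.symm
    | some z, none =>
      exfalso
      have : (1 : ℝ) / (e z + 1) ≠ 0 := by positivity
      exact this hxy
    | some z, some w =>
      have hxy' : (1:ℝ)/(e z + 1) = 1/(e w + 1) := hxy
      have h2 : z = w := by
        field_simp at hxy'
        first
          | exact hxy'.symm
          | exact hxy'
          | exact e.injective (by exact_mod_cast (by linarith : (e z : ℝ) = e w))
      exact congrArg some h2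
  exact (hcont.isClosedEmbedding hinj).isEmbedding.metrizableSpace

/-! ### The concrete cycle data -/

abbrev SigF (f : ℕ → ℕ) : Type := Σ k : ℕ, Fin (f (k+1))
abbrev SigFB (f : ℕ → ℕ) : Type := Σ k : ℕ, Fin (f (k+1)) × Bool

variable (p q r : ℕ → ℕ)

abbrev IX : Type := SigF p ⊕ (SigFB q ⊕ SigF r)

def lenX : IX p q r → ℕ :=
  Sum.elim (fun a => a.1 + 1) (Sum.elim (fun b => b.1 + 1) (fun c => 2 * (c.1 + 1)))

abbrev IY : Type := SigF p ⊕ (SigF q ⊕ SigF r)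

def lenY : IY p q r → ℕ :=
  Sum.elim (fun a => a.1 + 1) (Sum.elim (fun b => b.1 + 1) (fun c => c.1 + 1))

lemma lenX_pos : ∀ i, 0 < lenX p q r i := by rintro (a | b | c) <;> simp [lenX]

lemma lenY_pos : ∀ i, 0 < lenY p q r i := by rintro (a | b | c) <;> simp [lenY]

/-! ### counting subtypes -/

def sigFib (β : ℕ → Type) (m : ℕ) : {x : Σ k, β k // x.1 = m} ≃ β m where
  toFun x := cast (congrArg β x.2) x.1.2
  invFun b := ⟨⟨m, b⟩, rfl⟩
  left_inv := by rintro ⟨⟨k, b⟩, rfl⟩; rfl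
  right_inv := fun b => rfl

lemma finite_part (β : ℕ → Type) [∀ k, Finite (β k)] (P : (Σ k, β k) → Prop) (m : ℕ)
    (h : ∀ x, P x → x.1 = m) : Finite {x : Σ k, β k // P x} := by
  have hinj : Function.Injective
      (fun x : {x : Σ k, β k // P x} => sigFib β m ⟨x.1, h x.1 x.2⟩) := by
    intro a b hab
    have h2 := (sigFib β m).injective hab
    apply Subtype.ext
    have h3 := congrArg Subtype.val h2
    exact h3
  exact Finite.of_injective _ hinj

lemma finite_lenX (m : ℕ) : Finite {i : IX p q r // lenX p q r i = m} := by
  haveI h1 : Finite {a : SigF p // lenX p q r (Sum.inl a) = m} :=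
    finite_part _ _ (m - 1) (fun x hx => by simp only [lenX, Sum.elim_inl] at hx; omega)
  haveI h2 : Finite {b : SigFB q // lenX p q r (Sum.inr (Sum.inl b)) = m} :=
    finite_part _ _ (m - 1)
      (fun x hx => by simp only [lenX, Sum.elim_inr, Sum.elim_inl] at hx; omega)
  haveI h3 : Finite {c : SigF r // lenX p q r (Sum.inr (Sum.inr c)) = m} :=
    finite_part _ _ (m / 2 - 1)
      (fun x hx => by simp only [lenX, Sum.elim_inr] at hx; omega)
  haveI hInner : Finite {x : SigFB q ⊕ SigF r // lenX p q r (Sum.inr x) = m} :=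
    Finite.of_equiv _ (Equiv.subtypeSum (p := fun x => lenX p q r (Sum.inr x) = m)).symm
  exact Finite.of_equiv _ (Equiv.subtypeSum (p := fun i => lenX p q r i = m)).symm

lemma finite_lenY (m : ℕ) : Finite {i : IY p q r // lenY p q r i = m} := by
  haveI h1 : Finite {a : SigF p // lenY p q r (Sum.inl a) = m} :=
    finite_part _ _ (m - 1) (fun x hx => by simp only [lenY, Sum.elim_inl] at hx; omega)
  haveI h2 : Finite {b : SigF q // lenY p q r (Sum.inr (Sum.inl b)) = m} :=
    finite_part _ _ (m - 1)
      (fun x hx => by simp only [lenY, Sum.elim_inr, Sum.elim_inl] at hx; omega)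
  haveI h3 : Finite {c : SigF r // lenY p q r (Sum.inr (Sum.inr c)) = m} :=
    finite_part _ _ (m - 1)
      (fun x hx => by simp only [lenY, Sum.elim_inr] at hx; omega)
  haveI hInner : Finite {x : SigF q ⊕ SigF r // lenY p q r (Sum.inr x) = m} :=
    Finite.of_equiv _ (Equiv.subtypeSum (p := fun x => lenY p q r (Sum.inr x) = m)).symm
  exact Finite.of_equiv _ (Equiv.subtypeSum (p := fun i => lenY p q r i = m)).symm

lemma card_lenX (n : ℕ) (hn : 1 ≤ n) :
    Nat.card {i : IX p q r // lenX p q r i = n} =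
      p n + (2 * q n + (if Even n then r (n / 2) else 0)) := by
  haveI h1 : Finite {a : SigF p // lenX p q r (Sum.inl a) = n} :=
    finite_part _ _ (n - 1) (fun x hx => by simp only [lenX, Sum.elim_inl] at hx; omega)
  haveI h2 : Finite {b : SigFB q // lenX p q r (Sum.inr (Sum.inl b)) = n} :=
    finite_part _ _ (n - 1)
      (fun x hx => by simp only [lenX, Sum.elim_inr, Sum.elim_inl] at hx; omega)
  haveI h3 : Finite {c : SigF r // lenX p q r (Sum.inr (Sum.inr c)) = n} :=
    finite_part _ _ (n / 2 - 1)
      (fun x hx => by simp only [lenX, Sum.elim_inr] at hx; omega)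
  have hsplit : Nat.card {i : IX p q r // lenX p q r i = n} =
      Nat.card {a : SigF p // lenX p q r (Sum.inl a) = n} +
      (Nat.card {b : SigFB q // lenX p q r (Sum.inr (Sum.inl b)) = n} +
       Nat.card {c : SigF r // lenX p q r (Sum.inr (Sum.inr c)) = n}) := by
    rw [Nat.card_congr ((Equiv.subtypeSum (p := fun i => lenX p q r i = n)).trans
      (Equiv.sumCongr (Equiv.refl _) (Equiv.subtypeSum (p := fun x => lenX p q r (Sum.inr x) = n))))]
    rw [Nat.card_sum, Nat.card_sum]
  have cA : Nat.card {a : SigF p // lenX p q r (Sum.inl a) = n} = p n := by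
    rw [Nat.card_congr ((Equiv.subtypeEquivRight (q := fun a : SigF p => a.1 = n - 1)
      (fun a => by simp only [lenX, Sum.elim_inl]; omega)).trans
      (sigFib (fun k => Fin (p (k+1))) (n-1)))]
    rw [Nat.card_eq_fintype_card, Fintype.card_fin, Nat.sub_add_cancel hn]
  have cB : Nat.card {b : SigFB q // lenX p q r (Sum.inr (Sum.inl b)) = n} = 2 * q n := by
    rw [Nat.card_congr ((Equiv.subtypeEquivRight (q := fun b : SigFB q => b.1 = n - 1)
      (fun b => by simp only [lenX, Sum.elim_inr, Sum.elim_inl]; omega)).trans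
      (sigFib (fun k => Fin (q (k+1)) × Bool) (n-1)))]
    rw [Nat.card_prod, Nat.card_eq_fintype_card, Fintype.card_fin, Nat.sub_add_cancel hn]
    rw [Nat.card_eq_fintype_card, Fintype.card_bool, mul_comm]
  have cC : Nat.card {c : SigF r // lenX p q r (Sum.inr (Sum.inr c)) = n} =
      (if Even n then r (n / 2) else 0) := by
    by_cases he : Even n
    · have ht : n % 2 = 0 := Nat.even_iff.mp he
      rw [if_pos he]
      rw [Nat.card_congr ((Equiv.subtypeEquivRight (q := fun c : SigF r => c.1 = n / 2 - 1)
        (fun c => by simp only [lenX, Sum.elim_inr]; omega)).trans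
        (sigFib (fun k => Fin (r (k+1))) (n/2-1)))]
      rw [Nat.card_eq_fintype_card, Fintype.card_fin, Nat.sub_add_cancel (by omega : 1 ≤ n / 2)]
    · haveI : IsEmpty {c : SigF r // lenX p q r (Sum.inr (Sum.inr c)) = n} := by
        refine ⟨fun c => he ?_⟩
        have h2 : 2 * (c.1.1 + 1) = n := c.2
        exact h2 ▸ even_two_mul _
      simp [he, Nat.card_of_isEmpty]
  rw [hsplit, cA, cB, cC]

lemma card_lenY (n : ℕ) (hn : 1 ≤ n) :
    Nat.card {i : IY p q r // lenY p q r i = n} = p n + (q n + r n) := by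
  haveI h1 : Finite {a : SigF p // lenY p q r (Sum.inl a) = n} :=
    finite_part _ _ (n - 1) (fun x hx => by simp only [lenY, Sum.elim_inl] at hx; omega)
  haveI h2 : Finite {b : SigF q // lenY p q r (Sum.inr (Sum.inl b)) = n} :=
    finite_part _ _ (n - 1)
      (fun x hx => by simp only [lenY, Sum.elim_inr, Sum.elim_inl] at hx; omega)
  haveI h3 : Finite {c : SigF r // lenY p q r (Sum.inr (Sum.inr c)) = n} :=
    finite_part _ _ (n - 1)
      (fun x hx => by simp only [lenY, Sum.elim_inr] at hx; omega)
  have hsplit : Nat.card {i : IY p q r // lenY p q r i = n} =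
      Nat.card {a : SigF p // lenY p q r (Sum.inl a) = n} +
      (Nat.card {b : SigF q // lenY p q r (Sum.inr (Sum.inl b)) = n} +
       Nat.card {c : SigF r // lenY p q r (Sum.inr (Sum.inr c)) = n}) := by
    rw [Nat.card_congr ((Equiv.subtypeSum (p := fun i => lenY p q r i = n)).trans
      (Equiv.sumCongr (Equiv.refl _) (Equiv.subtypeSum (p := fun x => lenY p q r (Sum.inr x) = n))))]
    rw [Nat.card_sum, Nat.card_sum]
  have gen : ∀ (f : ℕ → ℕ) (P : SigF f → Prop) (hP : ∀ x, P x ↔ x.1 + 1 = n),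
      Nat.card {a : SigF f // P a} = f n := by
    intro f P hP
    rw [Nat.card_congr ((Equiv.subtypeEquivRight (q := fun a : SigF f => a.1 = n - 1)
      (fun a => by rw [hP]; omega)).trans (sigFib (fun k => Fin (f (k+1))) (n-1)))]
    rw [Nat.card_eq_fintype_card, Fintype.card_fin, Nat.sub_add_cancel hn]
  rw [hsplit, gen p _ (fun x => by simp [lenY]), gen q _ (fun x => by simp [lenY]),
    gen r _ (fun x => by simp [lenY])]

end Stmt11

namespace Stmt11

variable (p q r : ℕ → ℕ)

/-! ### The involution -/

def iot : Cyl (lenX p q r) → Cyl (lenX p q r)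
  | ⟨Sum.inl a, k⟩ => ⟨Sum.inl a, k⟩
  | ⟨Sum.inr (Sum.inl b), k⟩ => ⟨Sum.inr (Sum.inl ⟨b.1, (b.2.1, !b.2.2)⟩), k⟩
  | ⟨Sum.inr (Sum.inr c), k⟩ => ⟨Sum.inr (Sum.inr c), k + (c.1 + 1 : ℕ)⟩

lemma iot_iot (x : Cyl (lenX p q r)) : iot p q r (iot p q r x) = x := by
  match x with
  | ⟨Sum.inl a, k⟩ => rfl
  | ⟨Sum.inr (Sum.inl b), k⟩ =>
    exact congrArg (fun t => (⟨Sum.inr (Sum.inl ⟨b.1, (b.2.1, t)⟩), k⟩ : Cyl (lenX p q r)))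
      (Bool.not_not b.2.2)
  | ⟨Sum.inr (Sum.inr c), k⟩ =>
    show (⟨Sum.inr (Sum.inr c), k + (c.1 + 1 : ℕ) + (c.1 + 1 : ℕ)⟩ : Cyl (lenX p q r)) = _
    refine congrArg (fun t => (⟨Sum.inr (Sum.inr c), t⟩ : Cyl (lenX p q r))) ?_
    have h0 : ((c.1 + 1 : ℕ) : ZMod (2 * (c.1 + 1))) + ((c.1 + 1 : ℕ) : ZMod (2 * (c.1 + 1))) = 0 := by
      rw [← Nat.cast_add, show (c.1 + 1) + (c.1 + 1) = 2 * (c.1 + 1) by ring, ZMod.natCast_self]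
    rw [add_assoc]
    exact (congrArg (fun t => k + t) h0).trans (add_zero k)

lemma iot_sh (x : Cyl (lenX p q r)) : iot p q r (sh _ x) = sh _ (iot p q r x) := by
  match x with
  | ⟨Sum.inl a, k⟩ => rfl
  | ⟨Sum.inr (Sum.inl b), k⟩ => rfl
  | ⟨Sum.inr (Sum.inr c), k⟩ =>
    exact congrArg (fun t => (⟨Sum.inr (Sum.inr c), t⟩ : Cyl (lenX p q r))) (add_right_comm _ _ _)

def iotaX : Option (Cyl (lenX p q r)) → Option (Cyl (lenX p q r)) := Option.map (iot p q r)

lemma iotaX_iotaX (x : Option (Cyl (lenX p q r))) : iotaX p q r (iotaX p q r x) = x := by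
  cases x with
  | none => rfl
  | some z => exact congrArg some (iot_iot p q r z)

lemma iotaX_sh (x : Option (Cyl (lenX p q r))) :
    iotaX p q r (Option.map (sh _) x) = Option.map (sh _) (iotaX p q r x) := by
  cases x with
  | none => rfl
  | some z => exact congrArg some (iot_sh p q r z)

lemma halfProj_eq (x y : Option (Cyl (lenX p q r))) (h : iotaX p q r x = y) :
    halfProj (iotaX p q r) x = halfProj (iotaX p q r) y := Quot.sound h

/-! ### The quotient map to the halved cycle system -/

def phi : Option (Cyl (lenX p q r)) → Option (Cyl (lenY p q r))
  | none => none
  | some ⟨Sum.inl a, k⟩ => some ⟨Sum.inl a, k⟩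
  | some ⟨Sum.inr (Sum.inl b), k⟩ => some ⟨Sum.inr (Sum.inl ⟨b.1, b.2.1⟩), k⟩
  | some ⟨Sum.inr (Sum.inr c), k⟩ =>
      some ⟨Sum.inr (Sum.inr c),
        ZMod.castHom (show (c.1 + 1) ∣ 2 * (c.1 + 1) from ⟨2, by ring⟩) (ZMod (c.1 + 1)) k⟩

lemma phi_iot (x : Option (Cyl (lenX p q r))) : phi p q r (iotaX p q r x) = phi p q r x := by
  match x with
  | none => rfl
  | some ⟨Sum.inl a, k⟩ => rfl
  | some ⟨Sum.inr (Sum.inl b), k⟩ => rfl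
  | some ⟨Sum.inr (Sum.inr c), k⟩ =>
    refine congrArg (fun t => some (⟨Sum.inr (Sum.inr c), t⟩ : Cyl (lenY p q r))) ?_
    have key : ∀ k' : ZMod (2 * (c.1 + 1)),
        ZMod.castHom (show (c.1 + 1) ∣ 2 * (c.1 + 1) from ⟨2, by ring⟩) (ZMod (c.1 + 1))
          (k' + ((c.1 + 1 : ℕ) : ZMod (2 * (c.1 + 1)))) =
        ZMod.castHom (show (c.1 + 1) ∣ 2 * (c.1 + 1) from ⟨2, by ring⟩) (ZMod (c.1 + 1)) k' :=
      fun k' => by rw [map_add, map_natCast, ZMod.natCast_self, add_zero]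
    exact key k

def Phi : HalfQuot (iotaX p q r) → Option (Cyl (lenY p q r)) :=
  Quot.lift (phi p q r) (fun x y h => by rw [← h, phi_iot])

def psi : Option (Cyl (lenY p q r)) → HalfQuot (iotaX p q r)
  | none => halfProj (iotaX p q r) none
  | some ⟨Sum.inl a, k⟩ => halfProj (iotaX p q r) (some ⟨Sum.inl a, k⟩)
  | some ⟨Sum.inr (Sum.inl bb), k⟩ =>
      halfProj (iotaX p q r) (some ⟨Sum.inr (Sum.inl ⟨bb.1, (bb.2, false)⟩), k⟩)
  | some ⟨Sum.inr (Sum.inr c), k⟩ =>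
      halfProj (iotaX p q r) (some ⟨Sum.inr (Sum.inr c), ((k.val : ℕ) : ZMod (2 * (c.1 + 1)))⟩)

lemma Phi_psi (w : Option (Cyl (lenY p q r))) : Phi p q r (psi p q r w) = w := by
  match w with
  | none => rfl
  | some ⟨Sum.inl a, k⟩ => rfl
  | some ⟨Sum.inr (Sum.inl bb), k⟩ => rfl
  | some ⟨Sum.inr (Sum.inr c), k⟩ =>
    refine congrArg (fun t => some (⟨Sum.inr (Sum.inr c), t⟩ : Cyl (lenY p q r))) ?_
    haveI : NeZero (lenY p q r (Sum.inr (Sum.inr c))) := ⟨by simp [lenY]⟩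
    rw [map_natCast]
    exact ZMod.natCast_rightInverse k

lemma psi_Phi (x : Option (Cyl (lenX p q r))) :
    psi p q r (phi p q r x) = halfProj (iotaX p q r) x := by
  match x with
  | none => rfl
  | some ⟨Sum.inl a, k⟩ => rfl
  | some ⟨Sum.inr (Sum.inl ⟨m, j, b⟩), k⟩ =>
    cases b with
    | false => rfl
    | true =>
      exact (halfProj_eq p q r (some ⟨Sum.inr (Sum.inl ⟨m, (j, true)⟩), k⟩)
        (some ⟨Sum.inr (Sum.inl ⟨m, (j, false)⟩), k⟩) rfl).symm
  | some ⟨Sum.inr (Sum.inr c), k⟩ =>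
    haveI hmz : NeZero (lenX p q r (Sum.inr (Sum.inr c))) := ⟨by simp [lenX]⟩
    haveI hm : NeZero (c.1 + 1) := ⟨Nat.succ_ne_zero _⟩
    have hvlt : k.val < 2 * (c.1 + 1) := by
      have h := ZMod.val_lt k
      simpa only [lenX, Sum.elim_inr] using h
    have hk : ((k.val : ℕ) : ZMod (2 * (c.1 + 1))) = k := ZMod.natCast_rightInverse k
    have hcast : (ZMod.castHom (show (c.1 + 1) ∣ 2 * (c.1 + 1) from ⟨2, by ring⟩)
        (ZMod (c.1 + 1)) k) = ((k.val : ℕ) : ZMod (c.1 + 1)) := by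
      have key : ∀ k' : ZMod (2 * (c.1 + 1)),
          ZMod.castHom (show (c.1 + 1) ∣ 2 * (c.1 + 1) from ⟨2, by ring⟩) (ZMod (c.1 + 1)) k' =
          ((k'.val : ℕ) : ZMod (c.1 + 1)) := fun k' => by
        rw [ZMod.castHom_apply]
        exact (ZMod.natCast_val k').symm
      exact key k
    have step1 : psi p q r (phi p q r (some ⟨Sum.inr (Sum.inr c), k⟩)) =
        halfProj (iotaX p q r) (some ⟨Sum.inr (Sum.inr c),
          ((k.val % (c.1 + 1) : ℕ) : ZMod (2 * (c.1 + 1)))⟩) := by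
      show halfProj (iotaX p q r) (some ⟨Sum.inr (Sum.inr c),
        (((ZMod.castHom (show (c.1 + 1) ∣ 2 * (c.1 + 1) from ⟨2, by ring⟩)
          (ZMod (c.1 + 1)) k).val : ℕ) : ZMod (2 * (c.1 + 1)))⟩) = _
      rw [hcast, ZMod.val_natCast]
    rw [step1]
    rcases Nat.lt_or_ge k.val (c.1 + 1) with hlt | hge
    · rw [Nat.mod_eq_of_lt hlt, hk]
    · have hmod : k.val % (c.1 + 1) = k.val - (c.1 + 1) := by
        rw [Nat.mod_eq_sub_mod hge]
        exact Nat.mod_eq_of_lt (by omega)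
      rw [hmod]
      refine halfProj_eq p q r _ _ ?_
      refine congrArg (fun t => some (⟨Sum.inr (Sum.inr c), t⟩ : Cyl (lenX p q r))) ?_
      show ((k.val - (c.1 + 1) : ℕ) : ZMod (2 * (c.1 + 1))) + (((c.1 + 1) : ℕ) : ZMod (2 * (c.1 + 1))) = k
      rw [← Nat.cast_add, Nat.sub_add_cancel hge, hk]

def ePhi : HalfQuot (iotaX p q r) ≃ Option (Cyl (lenY p q r)) where
  toFun := Phi p q r
  invFun := psi p q r
  left_inv := by
    apply Quot.ind
    intro x
    exact psi_Phi p q r x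
  right_inv := Phi_psi p q r

/-! ### The induced map on the quotient -/

def TbarX : HalfQuot (iotaX p q r) → HalfQuot (iotaX p q r) :=
  Quot.map (Option.map (sh (lenX p q r)))
    (fun a b h => by rw [← h]; exact iotaX_sh p q r a)

lemma Phi_conj (z : HalfQuot (iotaX p q r)) :
    Phi p q r (TbarX p q r z) = Option.map (sh (lenY p q r)) (Phi p q r z) := by
  induction z using Quot.ind with
  | _ x =>
    show phi p q r (Option.map (sh (lenX p q r)) x) = Option.map (sh (lenY p q r)) (phi p q r x)
    match x with
    | none => rfl
    | some ⟨Sum.inl a, k⟩ => rfl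
    | some ⟨Sum.inr (Sum.inl b), k⟩ => rfl
    | some ⟨Sum.inr (Sum.inr c), k⟩ =>
      refine congrArg (fun t => some (⟨Sum.inr (Sum.inr c), t⟩ : Cyl (lenY p q r))) ?_
      have key : ∀ k' : ZMod (2 * (c.1 + 1)),
          ZMod.castHom (show (c.1 + 1) ∣ 2 * (c.1 + 1) from ⟨2, by ring⟩) (ZMod (c.1 + 1)) (k' + 1) =
          ZMod.castHom (show (c.1 + 1) ∣ 2 * (c.1 + 1) from ⟨2, by ring⟩) (ZMod (c.1 + 1)) k' + 1 :=
        fun k' => by rw [map_add, map_one]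
      exact key k

end Stmt11

namespace Stmt11

lemma zmod_countable (n : ℕ) : Countable (ZMod n) := by
  cases n
  · exact inferInstanceAs (Countable ℤ)
  · exact inferInstanceAs (Countable (Fin _))

variable {I : Type} (len : I → ℕ)

def shEquiv : Cyl len ≃ Cyl len where
  toFun := sh len
  invFun x := ⟨x.1, x.2 - 1⟩
  left_inv x := by
    show (⟨x.1, x.2 + 1 - 1⟩ : Cyl len) = x
    rw [add_sub_cancel_right]
  right_inv x := by
    show (⟨x.1, x.2 - 1 + 1⟩ : Cyl len) = x
    rw [sub_add_cancel]

def iotEquiv (p q r : ℕ → ℕ) : Cyl (lenX p q r) ≃ Cyl (lenX p q r) :=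
  ⟨iot p q r, iot p q r, iot_iot p q r, iot_iot p q r⟩

end Stmt11

open Stmt11 in
theorem statement11 (bs bg bh : ℕ → ℕ) (hbs1 : 0 < bs 1) :
    ∃ (X : Type) (_ : MetricSpace X) (_ : CompactSpace X) (T : X ≃ₜ X) (ι : X → X),
      Continuous ι ∧ ι ∘ ι = id ∧ ι ∘ ⇑T = ⇑T ∘ ι ∧ (∃ x : X, T x = x) ∧
      (∀ n : ℕ, 1 ≤ n → {x : X | (⇑T)^[n] x = x}.Finite) ∧
      (∀ n : ℕ, 1 ≤ n →
        numOrb (⇑T) n = bs n + 2 * bg n + (if Even n then bh (n / 2) else 0)) ∧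
      ∃ Tbar : HalfQuot ι → HalfQuot ι,
        (∀ x : X, Tbar (halfProj ι x) = halfProj ι (T x)) ∧
        (∀ n : ℕ, 1 ≤ n → numOrb Tbar n = bs n + bg n + bh n) := by
  classical
  set p : ℕ → ℕ := fun n => if n = 1 then bs 1 - 1 else bs n with hp
  letI : TopologicalSpace (Cyl (lenX p bg bh)) := ⊥
  haveI : DiscreteTopology (Cyl (lenX p bg bh)) := ⟨rfl⟩
  haveI : ∀ i, Countable (ZMod (lenX p bg bh i)) := fun i => zmod_countable _
  haveI : Countable (Cyl (lenX p bg bh)) := inferInstance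
  haveI : TopologicalSpace.MetrizableSpace (OnePoint (Cyl (lenX p bg bh))) :=
    metrizable_onePoint _
  let Tc : Cyl (lenX p bg bh) ≃ₜ Cyl (lenX p bg bh) :=
    ⟨shEquiv (lenX p bg bh), continuous_of_discreteTopology, continuous_of_discreteTopology⟩
  let TT : OnePoint (Cyl (lenX p bg bh)) ≃ₜ OnePoint (Cyl (lenX p bg bh)) := Tc.onePointCongr
  let ic : Cyl (lenX p bg bh) ≃ₜ Cyl (lenX p bg bh) :=
    ⟨iotEquiv p bg bh, continuous_of_discreteTopology, continuous_of_discreteTopology⟩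
  refine ⟨OnePoint (Cyl (lenX p bg bh)), TopologicalSpace.metrizableSpaceMetric _,
    inferInstanceAs (CompactSpace (OnePoint (Cyl (lenX p bg bh)))), TT,
    iotaX p bg bh, ?_, ?_, ?_, ?_, ?_, ?_, ?_⟩
  · exact ic.onePointCongr.continuous
  · funext x
    exact iotaX_iotaX p bg bh x
  · funext x
    exact iotaX_sh p bg bh x
  · exact ⟨none, rfl⟩
  · intro n hn
    exact perSet_finite_option (lenX p bg bh) (lenX_pos p bg bh) (finite_lenX p bg bh) n hn
  · intro n hn
    show numOrb (Option.map (sh (lenX p bg bh))) n = _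
    rw [numOrb_sh_option (lenX p bg bh) (lenX_pos p bg bh) (finite_lenX p bg bh) n hn]
    rw [card_lenX p bg bh n hn]
    have hpn : p n + (if n = 1 then 1 else 0) = bs n := by
      rcases eq_or_ne n 1 with rfl | h1
      · have hp1 : p 1 = bs 1 - 1 := by simp [hp]
        rw [hp1, if_pos rfl]
        omega
      · have hpn' : p n = bs n := by simp [hp, h1]
        rw [hpn', if_neg h1]
        omega
    calc p n + (2 * bg n + (if Even n then bh (n / 2) else 0)) + (if n = 1 then 1 else 0)
        = (p n + (if n = 1 then 1 else 0)) + (2 * bg n + (if Even n then bh (n / 2) else 0)) := by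
          ring
      _ = bs n + (2 * bg n + (if Even n then bh (n / 2) else 0)) := by rw [hpn]
      _ = bs n + 2 * bg n + (if Even n then bh (n / 2) else 0) := by ring
  · refine ⟨TbarX p bg bh, fun x => rfl, ?_⟩
    intro n hn
    refine (numOrb_conj (ePhi p bg bh) (TbarX p bg bh)
      (Option.map (sh (lenY p bg bh))) (Phi_conj p bg bh) n).trans ?_
    rw [numOrb_sh_option (lenY p bg bh) (lenY_pos p bg bh) (finite_lenY p bg bh) n hn]
    rw [card_lenY p bg bh n hn]
    have hpn : p n + (if n = 1 then 1 else 0) = bs n := by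
      rcases eq_or_ne n 1 with rfl | h1
      · have hp1 : p 1 = bs 1 - 1 := by simp [hp]
        rw [hp1, if_pos rfl]
        omega
      · have hpn' : p n = bs n := by simp [hp, h1]
        rw [hpn', if_neg h1]
        omega
    calc p n + (bg n + bh n) + (if n = 1 then 1 else 0)
        = (p n + (if n = 1 then 1 else 0)) + (bg n + bh n) := by ring
      _ = bs n + (bg n + bh n) := by rw [hpn]
      _ = bs n + bg n + bh n := by ring
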